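/- Let N ∈ ℕ, 0 < p < 1, q = √((1−p)/p), and k ∈ ℕ with k ≤ N. Define the k-th Krawtchouk function f_k(x) = √( binom(N,x) p^x (1−p)^{N−x} ) · √(binom(N,k)) · q^{−k} · K_k(x; p, N) for 0 ≤ x ≤ N. Then for every z ∈ ℂ, Σ_{x=0}^{N} √(binom(N,x)) f_k(x) z^x = √( binom(N,k) / (1+q²)^N ) · (1 − q z)^k (q + z)^{N−k}. In other words, the spherical transform ℓ_𝕊^{(N)} maps the Krawtchouk functions to the stated polynomials. -/

import Mathlib

open Real Nat

/-- The Pochhammer (rising factorial) symbol `(β)_j = β(β+1)⋯(β+j−1)`, with `(β)_0 = 1`. -/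
noncomputable def poch (β : ℝ) (j : ℕ) : ℝ :=
  ∏ i ∈ Finset.range j, (β + (i : ℝ))

/-- The Krawtchouk polynomial
`K_k(x; p, N) = Σ_{j=0}^{k} ((−k)_j (−x)_j / ((−N)_j · j!)) · p^{−j}`. -/
noncomputable def krawtchouk (k x : ℕ) (p : ℝ) (N : ℕ) : ℝ :=
  ∑ j ∈ Finset.range (k + 1),
    poch (-(k : ℝ)) j * poch (-(x : ℝ)) j / (poch (-(N : ℝ)) j * (j ! : ℝ)) * p ^ (-(j : ℤ))

/-- The `k`-th Krawtchouk function
`f_k(x) = √(binom(N,x) p^x (1−p)^{N−x}) · √(binom(N,k)) · q^{−k} · K_k(x; p, N)`. -/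
noncomputable def krawtchoukFun (N : ℕ) (p q : ℝ) (k x : ℕ) : ℝ :=
  Real.sqrt ((N.choose x : ℝ) * p ^ x * (1 - p) ^ (N - x)) *
    Real.sqrt (N.choose k : ℝ) * q ^ (-(k : ℤ)) * krawtchouk k x p N

lemma poch_neg_nat (n j : ℕ) :
    poch (-(n : ℝ)) j = (-1) ^ j * (n.descFactorial j : ℝ) := by
  induction j with
  | zero => simp [poch]
  | succ j ih =>
    rw [poch, Finset.prod_range_succ, ← poch, ih, Nat.descFactorial_succ]
    rcases lt_or_ge j n with h | h
    · have hc : ((n - j : ℕ) : ℝ) = (n : ℝ) - j := by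
        rw [Nat.cast_sub h.le]
      push_cast [hc]
      ring
    · rw [Nat.sub_eq_zero_of_le h, Nat.zero_mul, Nat.cast_zero, mul_zero]
      rcases eq_or_lt_of_le h with rfl | h'
      · simp
      · rw [Nat.descFactorial_eq_zero_iff_lt.2 h', Nat.cast_zero, mul_zero, zero_mul]


lemma kraw_inner_sum (N j : ℕ) (hj : j ≤ N) (w : ℂ) :
    ∑ x ∈ Finset.range (N + 1), (N.choose x : ℂ) * (x.descFactorial j : ℂ) * w ^ x
      = (N.descFactorial j : ℂ) * w ^ j * (1 + w) ^ (N - j) := by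
  have h1 : ∑ x ∈ Finset.range (N + 1), (N.choose x : ℂ) * (x.descFactorial j : ℂ) * w ^ x
      = ∑ x ∈ Finset.Ico j (N + 1), (N.choose x : ℂ) * (x.descFactorial j : ℂ) * w ^ x := by
    rw [Finset.range_eq_Ico]
    refine (Finset.sum_subset (Finset.Ico_subset_Ico (Nat.zero_le j) le_rfl) ?_).symm
    intro x hx hx'
    have hxj : x < j := by
      simp only [Finset.mem_Ico] at hx hx'
      omega
    rw [Nat.descFactorial_eq_zero_iff_lt.2 hxj, Nat.cast_zero, mul_zero, zero_mul]
  rw [h1, Finset.sum_Ico_eq_sum_range]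
  have h2 : N + 1 - j = (N - j) + 1 := by omega
  rw [h2]
  have h3 : ∀ y ∈ Finset.range (N - j + 1),
      (N.choose (j + y) : ℂ) * ((j + y).descFactorial j : ℂ) * w ^ (j + y)
        = (N.descFactorial j : ℂ) * w ^ j * (w ^ y * 1 ^ (N - j - y) * ((N - j).choose y : ℂ)) := by
    intro y hy
    have hyN : j + y ≤ N := by
      simp only [Finset.mem_range] at hy
      omega
    have key : N.choose (j + y) * (j + y).descFactorial j
        = N.descFactorial j * (N - j).choose y := by
      rw [Nat.descFactorial_eq_factorial_mul_choose, Nat.descFactorial_eq_factorial_mul_choose]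
      have h := Nat.choose_mul (n := N) (Nat.le_add_right j y)
      rw [Nat.add_sub_cancel_left] at h
      calc N.choose (j + y) * (j ! * (j + y).choose j)
          = N.choose (j + y) * (j + y).choose j * j ! := by ring
        _ = N.choose j * (N - j).choose y * j ! := by rw [h]
        _ = j ! * N.choose j * (N - j).choose y := by ring
    have keyC : (N.choose (j + y) : ℂ) * ((j + y).descFactorial j : ℂ)
        = (N.descFactorial j : ℂ) * ((N - j).choose y : ℂ) := by
      exact_mod_cast congrArg (Nat.cast : ℕ → ℂ) key
    rw [pow_add, one_pow]
    calc (N.choose (j + y) : ℂ) * ((j + y).descFactorial j : ℂ) * (w ^ j * w ^ y)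
        = (N.choose (j + y) : ℂ) * ((j + y).descFactorial j : ℂ) * w ^ j * w ^ y := by ring
      _ = (N.descFactorial j : ℂ) * ((N - j).choose y : ℂ) * w ^ j * w ^ y := by rw [keyC]
      _ = _ := by ring
  rw [Finset.sum_congr rfl h3, ← Finset.mul_sum, ← add_pow]
  rw [add_comm w 1]

lemma kraw_core (N k : ℕ) (hk : k ≤ N) (p : ℝ) (hp : p ≠ 0) (w : ℂ) :
    ∑ x ∈ Finset.range (N + 1), (N.choose x : ℂ) * ((krawtchouk k x p N : ℝ) : ℂ) * w ^ x =
      (1 - (((1 - p) / p : ℝ) : ℂ) * w) ^ k * (1 + w) ^ (N - k) := by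
  have hpC : (p : ℂ) ≠ 0 := by exact_mod_cast hp
  have hsum : ∀ x, (N.choose x : ℂ) * ((krawtchouk k x p N : ℝ) : ℂ) * w ^ x
      = ∑ j ∈ Finset.range (k + 1),
          (-1 : ℂ) ^ j * (k.choose j : ℂ) * ((p : ℂ)⁻¹) ^ j / (N.descFactorial j : ℂ) *
            ((N.choose x : ℂ) * (x.descFactorial j : ℂ) * w ^ x) := by
    intro x
    unfold krawtchouk
    push_cast [poch_neg_nat]
    rw [Finset.mul_sum, Finset.sum_mul]
    refine Finset.sum_congr rfl fun j hj => ?_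
    have hjk : j ≤ k := by simpa [Nat.lt_succ_iff] using hj
    have hdN : (N.descFactorial j : ℂ) ≠ 0 := by
      exact_mod_cast Nat.cast_ne_zero.2 (by rw [Ne, Nat.descFactorial_eq_zero_iff_lt]; omega)
    have hfj : (j ! : ℂ) ≠ 0 := Nat.cast_ne_zero.2 (Nat.factorial_ne_zero j)
    have hs : ((-1 : ℂ)) ^ j ≠ 0 := pow_ne_zero _ (by norm_num)
    have hdk : ((k.descFactorial j : ℕ) : ℂ) = (j ! : ℂ) * (k.choose j : ℂ) := by
      exact_mod_cast congrArg (Nat.cast : ℕ → ℂ) (Nat.descFactorial_eq_factorial_mul_choose k j)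
    simp only [zpow_neg, zpow_natCast, hdk]
    rw [← inv_pow]
    field_simp
  rw [Finset.sum_congr rfl fun x _ => hsum x, Finset.sum_comm]
  have hrhs : (1 - (((1 - p) / p : ℝ) : ℂ) * w) ^ k * (1 + w) ^ (N - k)
      = ∑ j ∈ Finset.range (k + 1),
          (-(w * (p : ℂ)⁻¹)) ^ j * (1 + w) ^ (k - j) * (k.choose j : ℂ) * (1 + w) ^ (N - k) := by
    rw [← Finset.sum_mul, ← add_pow]
    congr 2
    push_cast
    field_simp
    ring
  rw [hrhs]
  refine Finset.sum_congr rfl fun j hj => ?_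
  have hjk : j ≤ k := by simpa [Nat.lt_succ_iff] using hj
  have hdN : (N.descFactorial j : ℂ) ≠ 0 := by
    exact_mod_cast Nat.cast_ne_zero.2 (by rw [Ne, Nat.descFactorial_eq_zero_iff_lt]; omega)
  rw [← Finset.mul_sum, kraw_inner_sum N j (le_trans hjk hk) w]
  have hNj : N - j = (k - j) + (N - k) := by omega
  rw [hNj, pow_add]
  have hneg : (-(w * (p : ℂ)⁻¹)) ^ j = (-1) ^ j * w ^ j * ((p : ℂ)⁻¹) ^ j := by
    rw [show -(w * (p : ℂ)⁻¹) = -1 * w * (p : ℂ)⁻¹ by ring, mul_pow, mul_pow]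
  rw [hneg]
  field_simp

lemma kraw_pow_helper (q z : ℂ) (hq : q ≠ 0) (x N : ℕ) (h : x ≤ N) :
    q ^ (N - x) * z ^ x = q ^ N * (z / q) ^ x := by
  obtain ⟨m, rfl⟩ : ∃ m, N = x + m := ⟨N - x, by omega⟩
  rw [Nat.add_sub_cancel_left, div_pow, pow_add]
  field_simp


/-- The spherical transform `ℓ_𝕊^{(N)}` maps the Krawtchouk functions to the stated
polynomials: for `0 < p < 1`, `q = √((1−p)/p)`, `k ≤ N` and every `z ∈ ℂ`,
`Σ_{x=0}^{N} √(binom(N,x)) f_k(x) z^x = √(binom(N,k)/(1+q²)^N) (1 − qz)^k (q + z)^{N−k}`. -/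
theorem sphericalTransform_krawtchoukFun (N : ℕ) (p : ℝ) (hp0 : 0 < p) (hp1 : p < 1)
    (q : ℝ) (hq : q = Real.sqrt ((1 - p) / p)) (k : ℕ) (hk : k ≤ N) (z : ℂ) :
    ∑ x ∈ Finset.range (N + 1),
        ((Real.sqrt (N.choose x : ℝ) : ℝ) : ℂ) * ((krawtchoukFun N p q k x : ℝ) : ℂ) * z ^ x =
      ((Real.sqrt ((N.choose k : ℝ) / (1 + q ^ 2) ^ N) : ℝ) : ℂ) *
        (1 - (q : ℂ) * z) ^ k * ((q : ℂ) + z) ^ (N - k) := by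
  have hp1' : 0 < 1 - p := by linarith
  have hq0 : 0 < q := hq ▸ Real.sqrt_pos.2 (div_pos hp1' hp0)
  have hq2 : q ^ 2 = (1 - p) / p := by rw [hq, Real.sq_sqrt (le_of_lt (div_pos hp1' hp0))]
  set sp := Real.sqrt p with hsp
  have hsp0 : 0 < sp := Real.sqrt_pos.2 hp0
  have hsp2 : sp ^ 2 = p := Real.sq_sqrt hp0.le
  have hqC : (q : ℂ) ≠ 0 := by exact_mod_cast hq0.ne'
  -- the sqrt splitting
  have hsqrt : ∀ x, x ≤ N → Real.sqrt ((N.choose x : ℝ) * p ^ x * (1 - p) ^ (N - x))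
      = Real.sqrt (N.choose x : ℝ) * sp ^ N * q ^ (N - x) := by
    intro x hxN
    have hnn : 0 ≤ Real.sqrt (N.choose x : ℝ) * sp ^ N * q ^ (N - x) := by positivity
    have hsq : (Real.sqrt (N.choose x : ℝ) * sp ^ N * q ^ (N - x)) ^ 2
        = (N.choose x : ℝ) * p ^ x * (1 - p) ^ (N - x) := by
      have h1 : (Real.sqrt (N.choose x : ℝ)) ^ 2 = (N.choose x : ℝ) :=
        Real.sq_sqrt (Nat.cast_nonneg _)
      have hpN : p ^ N = p ^ x * p ^ (N - x) := by
        rw [← pow_add]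
        congr 1
        omega
      calc (Real.sqrt (N.choose x : ℝ) * sp ^ N * q ^ (N - x)) ^ 2
          = (Real.sqrt (N.choose x : ℝ)) ^ 2 * (sp ^ 2) ^ N * (q ^ 2) ^ (N - x) := by ring
        _ = (N.choose x : ℝ) * p ^ N * ((1 - p) / p) ^ (N - x) := by rw [h1, hsp2, hq2]
        _ = (N.choose x : ℝ) * p ^ x * (1 - p) ^ (N - x) := by
            rw [hpN, div_pow]
            field_simp
    rw [← hsq, Real.sqrt_sq hnn]
  -- per-term rewriting
  have hterm : ∀ x ∈ Finset.range (N + 1),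
      ((Real.sqrt (N.choose x : ℝ) : ℝ) : ℂ) * ((krawtchoukFun N p q k x : ℝ) : ℂ) * z ^ x
        = ((sp ^ N * Real.sqrt (N.choose k : ℝ) * q ^ (-(k : ℤ)) : ℝ) : ℂ) * (q : ℂ) ^ N *
            ((N.choose x : ℂ) * ((krawtchouk k x p N : ℝ) : ℂ) * (z / q) ^ x) := by
    intro x hx
    have hxN : x ≤ N := by
      simp only [Finset.mem_range] at hx
      omega
    unfold krawtchoukFun
    rw [hsqrt x hxN]
    have hCx : ((Real.sqrt (N.choose x : ℝ) : ℝ) : ℂ) * ((Real.sqrt (N.choose x : ℝ) : ℝ) : ℂ)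
        = ((N.choose x : ℕ) : ℂ) := by
      rw [← Complex.ofReal_mul, Real.mul_self_sqrt (Nat.cast_nonneg _)]
      push_cast
      rfl
    have hpow : (q : ℂ) ^ (N - x) * z ^ x = (q : ℂ) ^ N * (z / (q : ℂ)) ^ x :=
      kraw_pow_helper _ _ hqC _ _ hxN
    push_cast
    linear_combination
      (((sp : ℝ) : ℂ) ^ N * ((Real.sqrt (N.choose k : ℝ) : ℝ) : ℂ) * ((q : ℂ)) ^ (-(k : ℤ)) *
        ((krawtchouk k x p N : ℝ) : ℂ) * ((q : ℂ) ^ (N - x) * z ^ x)) * hCx +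
      (((N.choose x : ℕ) : ℂ) * ((sp : ℝ) : ℂ) ^ N * ((Real.sqrt (N.choose k : ℝ) : ℝ) : ℂ) *
        ((q : ℂ)) ^ (-(k : ℤ)) * ((krawtchouk k x p N : ℝ) : ℂ)) * hpow
  rw [Finset.sum_congr rfl hterm, ← Finset.mul_sum,
    kraw_core N k hk p hp0.ne' (z / q)]
  -- final algebra
  have hc1 : (((1 - p) / p : ℝ) : ℂ) = (q : ℂ) ^ 2 := by
    rw [← hq2]
    push_cast
    ring
  have hc2 : (1 : ℂ) - (q : ℂ) ^ 2 * (z / q) = 1 - (q : ℂ) * z := by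
    field_simp
  have hc3 : (1 : ℂ) + z / q = ((q : ℂ) + z) / q := by
    field_simp
  have hc4 : Real.sqrt ((N.choose k : ℝ) / (1 + q ^ 2) ^ N)
      = Real.sqrt (N.choose k : ℝ) * sp ^ N := by
    have h1q : (1 : ℝ) + q ^ 2 = 1 / p := by
      rw [hq2]
      field_simp
      ring
    have harg : (N.choose k : ℝ) / (1 + q ^ 2) ^ N = (N.choose k : ℝ) * p ^ N := by
      rw [h1q]
      rw [div_pow, one_pow]
      field_simp
    rw [harg, Real.sqrt_mul (Nat.cast_nonneg _),
      show p ^ N = (sp ^ N) ^ 2 by rw [← hsp2, pow_right_comm],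
      Real.sqrt_sq (by positivity)]
  rw [hc1, hc2, hc3, hc4, div_pow]
  have hzp : ((q : ℝ) ^ (-(k : ℤ)) : ℝ) = (q ^ k)⁻¹ := by
    rw [zpow_neg, zpow_natCast]
  rw [hzp]
  push_cast
  have hqk : (q : ℂ) ^ k ≠ 0 := pow_ne_zero _ hqC
  have hqNk : (q : ℂ) ^ (N - k) ≠ 0 := pow_ne_zero _ hqC
  have hqN : (q : ℂ) ^ N = (q : ℂ) ^ k * (q : ℂ) ^ (N - k) := by
    rw [← pow_add]
    congr 1
    omega
  field_simp [hqN]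
  rw [hqN]
  ring
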